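/- Let G be a nonabelian group of exponent 4, let R be a commutative ring with R₂ = {0}, and let σ be a nontrivial orientation homomorphism of G whose kernel N = ker(σ) is an elementary abelian 2-group. Then the set of antisymmetric elements (RG)⁻ under φ_σ is commutative. -/

import Mathlib

open Subgroup

/-- The oriented involution `φ_σ` on the group ring `R[G]`, determined by an
orientation homomorphism `σ : G → {±1}`:  `φ_σ (∑ r_g g) = ∑ r_g σ(g) g⁻¹`. -/
noncomputable def phiSigma {R : Type*} [CommRing R] {G : Type*} [Group G]
    (σ : G →* ℤˣ) (x : MonoidAlgebra R G) : MonoidAlgebra R G :=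
  Finsupp.sum x.coeff fun g r => MonoidAlgebra.single g⁻¹ ((σ g : ℤ) • r)

/-- The set of antisymmetric elements `(RG)⁻ = {x | φ_σ(x) = -x}` of the group ring is
commutative. -/
def AntisymmCommute (R : Type*) [CommRing R] (G : Type*) [Group G] (σ : G →* ℤˣ) : Prop :=
  ∀ x y : MonoidAlgebra R G, phiSigma σ x = -x → phiSigma σ y = -y → x * y = y * x

lemma phiSigma_apply {R : Type*} [CommRing R] {G : Type*} [Group G]
    (σ : G →* ℤˣ) (x : MonoidAlgebra R G) (h : G) :
    (phiSigma σ x).coeff h = (σ h⁻¹ : ℤ) • x.coeff h⁻¹ := by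
  classical
  unfold phiSigma
  rw [MonoidAlgebra.coeff_finsuppSum, Finsupp.sum_apply, Finsupp.sum]
  have : ∀ g ∈ x.coeff.support, g ≠ h⁻¹ →
      (MonoidAlgebra.single g⁻¹ ((σ g : ℤ) • x.coeff g) : MonoidAlgebra R G).coeff h = 0 := by
    intro g hg hne
    rw [MonoidAlgebra.coeff_single, Finsupp.single_apply, if_neg]
    intro e; exact hne (by rw [← e]; simp)
  by_cases hh : h⁻¹ ∈ x.coeff.support
  · rw [Finset.sum_eq_single h⁻¹ this (fun hc => absurd hh hc)]
    simp
  · rw [Finset.sum_eq_zero]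
    · simp [Finsupp.notMem_support_iff.mp hh]
    · intro g hg
      exact this g hg (fun e => hh (e ▸ hg))

lemma antisymm_support {R : Type*} [CommRing R] {G : Type*} [Group G]
    (h2 : ∀ r : R, 2 * r = 0 → r = 0) (σ : G →* ℤˣ)
    (hN : ∀ n ∈ σ.ker, n ^ 2 = 1)
    {x : MonoidAlgebra R G} (hx : phiSigma σ x = -x) :
    ∀ g ∈ x.coeff.support, g ∉ σ.ker ∧ x.coeff g⁻¹ = x.coeff g := by
  intro g hg
  have hxg : x.coeff g ≠ 0 := Finsupp.mem_support_iff.mp hg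
  have key : (σ g⁻¹ : ℤ) • x.coeff g⁻¹ = - x.coeff g := by
    have := congrArg (fun z : MonoidAlgebra R G => z.coeff g) hx
    simpa [phiSigma_apply] using this
  have hgker : g ∉ σ.ker := by
    intro hk
    have hinv : g⁻¹ = g := by
      have hgg : g * g = 1 := by rw [← sq]; exact hN g hk
      exact inv_eq_of_mul_eq_one_right hgg
    rw [hinv, (hk : σ g = 1)] at key
    simp only [Units.val_one, one_smul] at key
    have h2x : 2 * x.coeff g = 0 := by linear_combination key
    exact hxg (h2 (x.coeff g) h2x)
  refine ⟨hgker, ?_⟩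
  have hσg : σ g = -1 := by
    rcases Int.units_eq_one_or (σ g) with h | h
    · exact absurd h hgker
    · exact h
  have hσgi : σ g⁻¹ = -1 := by rw [map_inv, hσg]; rfl
  rw [hσgi] at key
  simpa using (neg_injective (by simpa using key) : x.coeff g⁻¹ = x.coeff g)

lemma inv_mul_inv_eq {G : Type*} [Group G] (σ : G →* ℤˣ)
    (hN : ∀ n ∈ σ.ker, n ^ 2 = 1) {g h : G} (hg : g ∉ σ.ker) (hh : h ∉ σ.ker) :
    g⁻¹ * h⁻¹ = h * g := by
  have hσg : σ g = -1 := (Int.units_eq_one_or (σ g)).resolve_left hg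
  have hσh : σ h = -1 := (Int.units_eq_one_or (σ h)).resolve_left hh
  have hmem : g⁻¹ * h⁻¹ ∈ σ.ker := by
    have : σ (g⁻¹ * h⁻¹) = 1 := by
      rw [map_mul, map_inv, map_inv, hσg, hσh]; rfl
    exact this
  have hsq : (g⁻¹ * h⁻¹) * (g⁻¹ * h⁻¹) = 1 := by
    rw [← sq]; exact hN _ hmem
  have := inv_eq_of_mul_eq_one_right hsq
  rw [← this]; group

/-- If `G` is a nonabelian group of exponent 4, `R₂ = {0}`, and the kernel of the
nontrivial orientation `σ` is an elementary abelian 2-group, then `(RG)⁻` is commutative. -/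
theorem antisymm_commute_of_elementary_abelian_kernel
    {R : Type*} [CommRing R] {G : Type*} [Group G]
    (hG : ∃ x y : G, x * y ≠ y * x) (hexp : Monoid.exponent G = 4)
    (h2 : ∀ r : R, 2 * r = 0 → r = 0)
    (σ : G →* ℤˣ) (hσ : σ.ker ≠ ⊤)
    (hN : ∀ n ∈ σ.ker, n ^ 2 = 1) :
    AntisymmCommute R G σ := by
  intro x y hxa hya
  have hx := antisymm_support h2 σ hN hxa
  have hy := antisymm_support h2 σ hN hya
  have hxinv : ∀ g ∈ x.coeff.support, g⁻¹ ∈ x.coeff.support := by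
    intro g hg
    rw [Finsupp.mem_support_iff, (hx g hg).2]
    exact Finsupp.mem_support_iff.mp hg
  have hyinv : ∀ h ∈ y.coeff.support, h⁻¹ ∈ y.coeff.support := by
    intro h hh
    rw [Finsupp.mem_support_iff, (hy h hh).2]
    exact Finsupp.mem_support_iff.mp hh
  rw [MonoidAlgebra.mul_def, MonoidAlgebra.mul_def]
  rw [Finsupp.sum, Finsupp.sum]
  simp only [Finsupp.sum]
  rw [Finset.sum_comm (s := y.coeff.support) (t := x.coeff.support)]
  refine Finset.sum_nbij' (i := fun g => g⁻¹) (j := fun g => g⁻¹) hxinv hxinv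
    (fun g _ => inv_inv g) (fun g _ => inv_inv g) ?_
  intro g hg
  refine Finset.sum_nbij' (i := fun h => h⁻¹) (j := fun h => h⁻¹) hyinv hyinv
    (fun h _ => inv_inv h) (fun h _ => inv_inv h) ?_
  intro h hh
  show MonoidAlgebra.single (g * h) (x.coeff g * y.coeff h)
      = MonoidAlgebra.single (h⁻¹ * g⁻¹) (y.coeff h⁻¹ * x.coeff g⁻¹)
  rw [(hy h hh).2, (hx g hg).2,
    inv_mul_inv_eq σ hN (hy h hh).1 (hx g hg).1, mul_comm (y.coeff h) (x.coeff g)]
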